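/- arXiv:2401.05193 — 2 statements merged into one kernel-verified Lean document; each statement's English description precedes it below -/
import Mathlib

section
/- Consider a complete binary tree with L levels and 2^L − 1 nodes, with leaf actions a_{L,1}, …, a_{L,2^{L−1}}. Fix ε > 0 and for each root-to-leaf path p define f^{(p)}(a) = 1 if a is the leaf of p, f^{(p)}(a) = 1 − 2ε if a is a non-leaf node on p, and f^{(p)}(a) = 1 − 12ε otherwise. Then the sequence of leaf actions a_{L,1}, …, a_{L,2^{L−1}−1} is an ε-independent sequence for the function class F_tree = {f^{(p)} : p a root-to-leaf path}. Consequently the ε-eluder dimension of F_tree is at least 2^{L−1} − 1. -/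
/-- Nodes of a complete binary tree with `L` levels: a node at level `l`
(root is level `0`) is indexed by an element of `Fin (2^l)`. -/
def TreeNode (L : ℕ) := Σ l : Fin L, Fin (2 ^ (l : ℕ))

/-- The reward function `f^{(p)}` associated with the root-to-leaf path `p` ending
at the leaf of index `j`: value `1` at the leaf of the path, `1 - 2ε` at the other
nodes of the path, and `1 - 12ε` at every other node.  The node at level `l` on the
path to leaf `j` has index `j / 2^(L-1-l)`. -/
noncomputable def fTree (L : ℕ) (ε : ℝ) (j : Fin (2 ^ (L - 1))) (z : TreeNode L) : ℝ :=
  if (z.1 : ℕ) = L - 1 ∧ (z.2 : ℕ) = (j : ℕ) then 1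
  else if (z.2 : ℕ) = (j : ℕ) / 2 ^ (L - 1 - (z.1 : ℕ)) then 1 - 2 * ε
  else 1 - 12 * ε

/-- The function class `F_tree`, one function per root-to-leaf path (i.e. per leaf). -/
noncomputable def FTreeClass (L : ℕ) (ε : ℝ) : Set (TreeNode L → ℝ) :=
  {f | ∃ j : Fin (2 ^ (L - 1)), f = fTree L ε j}

/-- The leaf node (level `L-1`) of index `j`. -/
def leafNode (L : ℕ) (hL : 0 < L) (j : Fin (2 ^ (L - 1))) : TreeNode L :=
  ⟨⟨L - 1, Nat.sub_lt hL one_pos⟩, j⟩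

/-- `z` is `ε`-independent of `z_1, …, z_n` w.r.t. `G`: there are `g, g' ∈ G` with
`sqrt(Σᵢ (g zᵢ - g' zᵢ)²) ≤ ε` but `g z - g' z > ε`. -/
def epsIndep {Z : Type*} (G : Set (Z → ℝ)) (ε : ℝ) (z : Z) (zs : List Z) : Prop :=
  ∃ g ∈ G, ∃ g' ∈ G,
    Real.sqrt ((zs.map fun w => (g w - g' w) ^ 2).sum) ≤ ε ∧ ε < g z - g' z

lemma fTree_leaf (L : ℕ) (hL : 0 < L) (ε : ℝ) (j k : Fin (2 ^ (L - 1))) :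
    fTree L ε j (leafNode L hL k) = if (k : ℕ) = (j : ℕ) then 1 else 1 - 12 * ε := by
  simp only [fTree, leafNode, Nat.sub_self, pow_zero, Nat.div_one, true_and]
  by_cases h : (k : ℕ) = (j : ℕ) <;> simp [h]

lemma key (L : ℕ) (hL : 2 ≤ L) (ε : ℝ) (hε : 0 < ε) (n : ℕ) (hn : n < 2 ^ (L - 1) - 1)
    (zs : List (TreeNode L))
    (hzs : ∀ z ∈ zs, ∃ k : Fin (2 ^ (L - 1)), (k : ℕ) < n ∧ z = leafNode L (Nat.lt_of_lt_of_le two_pos hL) k) :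
    epsIndep (FTreeClass L ε) ε
      (leafNode L (Nat.lt_of_lt_of_le two_pos hL) ⟨n, hn.trans_le (Nat.sub_le _ _)⟩) zs := by
  have hL0 : 0 < L := by omega
  have h2 : 1 ≤ 2 ^ (L - 1) := Nat.one_le_two_pow
  set jn : Fin (2 ^ (L - 1)) := ⟨n, hn.trans_le (Nat.sub_le _ _)⟩
  set jl : Fin (2 ^ (L - 1)) := ⟨2 ^ (L - 1) - 1, by omega⟩
  refine ⟨fTree L ε jn, ⟨jn, rfl⟩, fTree L ε jl, ⟨jl, rfl⟩, ?_, ?_⟩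
  · have : (zs.map fun w => (fTree L ε jn w - fTree L ε jl w) ^ 2).sum = 0 := by
      apply List.sum_eq_zero
      intro x hx
      simp only [List.mem_map] at hx
      obtain ⟨w, hw, rfl⟩ := hx
      obtain ⟨k, hk, rfl⟩ := hzs w hw
      rw [fTree_leaf L hL0, fTree_leaf L hL0]
      have h1 : (k : ℕ) ≠ (jn : ℕ) := by simp [jn]; omega
      have h2' : (k : ℕ) ≠ (jl : ℕ) := by simp [jl]; omega
      simp [h1, h2']
    rw [this, Real.sqrt_zero]; exact hε.le
  · rw [fTree_leaf L hL0, fTree_leaf L hL0]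
    have h1 : (jn : ℕ) = (jn : ℕ) := rfl
    have h2' : (jn : ℕ) ≠ (jl : ℕ) := by simp [jn, jl]; omega
    rw [if_pos h1, if_neg h2']
    linarith

/-- the sequence of leaves `a_{L,1}, …, a_{L,2^{L-1}-1}` is an
`ε`-independent sequence for `F_tree`; consequently there is a sequence of length
`2^{L-1} - 1` each of whose elements is `ε`-independent of its predecessors, i.e.
the `ε`-eluder dimension of `F_tree` is at least `2^{L-1} - 1`. -/
theorem stmt_3 (L : ℕ) (hL : 2 ≤ L) (ε : ℝ) (hε : 0 < ε) :
    (∀ n : ℕ, ∀ hn : n < 2 ^ (L - 1) - 1,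
      epsIndep (FTreeClass L ε) ε
        (leafNode L (by omega) ⟨n, hn.trans_le (Nat.sub_le _ _)⟩)
        (List.ofFn fun k : Fin n =>
          leafNode L (by omega) ⟨k, ((k.2.trans hn).trans_le (Nat.sub_le _ _))⟩)) ∧
    ∃ zs : List (TreeNode L), zs.length = 2 ^ (L - 1) - 1 ∧
      ∀ n : ℕ, ∀ hn : n < zs.length,
        epsIndep (FTreeClass L ε) ε (zs.get ⟨n, hn⟩) (zs.take n) := by
  constructor
  · intro n hn
    apply key L hL ε hε n hn
    intro z hz
    rw [List.mem_ofFn] at hz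
    obtain ⟨k, rfl⟩ := hz
    exact ⟨_, k.2, rfl⟩
  · refine ⟨List.ofFn (fun k : Fin (2 ^ (L - 1) - 1) =>
      leafNode L (by omega) ⟨k, (k.2.trans_le (Nat.sub_le _ _))⟩), by simp, ?_⟩
    intro n hn
    rw [List.length_ofFn] at hn
    have hget : (List.ofFn (fun k : Fin (2 ^ (L - 1) - 1) =>
        leafNode L (by omega) ⟨k, (k.2.trans_le (Nat.sub_le _ _))⟩)).get
        ⟨n, by simpa using hn⟩ = leafNode L (by omega) ⟨n, hn.trans_le (Nat.sub_le _ _)⟩ := by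
      simp [List.get_ofFn]
    rw [hget]
    apply key L hL ε hε n hn
    intro z hz
    have := List.mem_take_iff_getElem.mp hz
    obtain ⟨i, hi, rfl⟩ := this
    simp only [List.length_ofFn, lt_min_iff] at hi
    rw [List.getElem_ofFn]
    exact ⟨_, by simpa using hi.1, rfl⟩
end

section
/- Let P be a probability distribution on contexts X, A a finite action set, and f⋆, f̂ : X × A → ℝ bounded measurable functions with greedy policy π̂(x) ∈ argmax_a f̂(x,a). Then E_{x∼P}[ max_a f⋆(x,a) − f⋆(x, π̂(x)) ] ≤ 2·sqrt( |A| · E_{x∼P, a∼Uniform(A)}[ (f⋆(x,a) − f̂(x,a))² ] ). -/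
open MeasureTheory

/-- for a context distribution `P`, a finite action set `A`, bounded
measurable `f⋆, f̂ : X × A → ℝ` and the greedy policy `π̂` for `f̂`,
`E_{x∼P}[ max_a f⋆(x,a) - f⋆(x, π̂(x)) ]
  ≤ 2 √( |A| · E_{x∼P, a∼Uniform(A)}[ (f⋆(x,a) - f̂(x,a))² ] )`,
where `E_{x∼P, a∼Uniform(A)}[g] = (1/|A|) E_{x∼P}[ Σ_a g(x,a) ]`. -/
theorem stmt_6 {X : Type*} [MeasurableSpace X] {A : Type*} [Fintype A] [Nonempty A]
    [MeasurableSpace A] [MeasurableSingletonClass A]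
    (P : Measure X) [IsProbabilityMeasure P]
    (fstar fhat : X → A → ℝ) (pihat : X → A)
    (C : ℝ) (hbound : ∀ x a, |fstar x a| ≤ C ∧ |fhat x a| ≤ C)
    (hm1 : ∀ a, Measurable fun x => fstar x a)
    (hm2 : ∀ a, Measurable fun x => fhat x a)
    (hmp : Measurable pihat)
    (hhat : ∀ x a, fhat x a ≤ fhat x (pihat x)) :
    (∫ x, ((Finset.univ.sup' Finset.univ_nonempty fun a => fstar x a)
        - fstar x (pihat x)) ∂P)
      ≤ 2 * Real.sqrt ((Fintype.card A : ℝ) *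
          ((Fintype.card A : ℝ)⁻¹ * ∫ x, ∑ a, (fstar x a - fhat x a) ^ 2 ∂P)) := by
  have hcard : (0 : ℝ) < (Fintype.card A : ℝ) := by
    exact_mod_cast Fintype.card_pos
  set h : X → ℝ := fun x => ∑ a, (fstar x a - fhat x a) ^ 2 with hh
  set g : X → ℝ := fun x => Real.sqrt (h x) with hg
  have hhnn : ∀ x, 0 ≤ h x := fun x => Finset.sum_nonneg fun a _ => sq_nonneg _
  have hgnn : ∀ x, 0 ≤ g x := fun x => Real.sqrt_nonneg _
  have hhm : Measurable h := by
    apply Finset.measurable_sum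
    intro a _
    exact ((hm1 a).sub (hm2 a)).pow_const 2
  have hgm : Measurable g := hhm.sqrt
  -- bound on g
  have hgb : ∀ x, ‖g x‖ ≤ Real.sqrt ((Fintype.card A : ℝ) * (2 * C) ^ 2) := by
    intro x
    rw [Real.norm_eq_abs, abs_of_nonneg (hgnn x)]
    apply Real.sqrt_le_sqrt
    have : ∀ a : A, (fstar x a - fhat x a) ^ 2 ≤ (2 * C) ^ 2 := by
      intro a
      have h1 := (hbound x a).1
      have h2 := (hbound x a).2
      have : |fstar x a - fhat x a| ≤ 2 * C := by
        calc |fstar x a - fhat x a| ≤ |fstar x a| + |fhat x a| := abs_sub _ _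
          _ ≤ C + C := add_le_add h1 h2
          _ = 2 * C := by ring
      calc (fstar x a - fhat x a) ^ 2 = |fstar x a - fhat x a| ^ 2 := (sq_abs _).symm
        _ ≤ (2 * C) ^ 2 := by
            apply pow_le_pow_left₀ (abs_nonneg _) this
    calc h x ≤ ∑ _a : A, (2 * C) ^ 2 := Finset.sum_le_sum fun a _ => this a
      _ = (Fintype.card A : ℝ) * (2 * C) ^ 2 := by
          rw [Finset.sum_const, Finset.card_univ, nsmul_eq_mul]
  have hgl2 : MemLp g 2 P := by
    refine MemLp.mono_exponent (memLp_top_of_bound hgm.aestronglyMeasurable _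
      (Filter.Eventually.of_forall hgb)) le_top
  have hgint : Integrable g P := hgl2.integrable one_le_two
  -- pointwise bound
  have hpt : ∀ x, (Finset.univ.sup' Finset.univ_nonempty fun a => fstar x a)
      - fstar x (pihat x) ≤ 2 * g x := by
    intro x
    rw [sub_le_iff_le_add]
    apply Finset.sup'_le
    intro a _
    have key : ∀ b : A, |fstar x b - fhat x b| ≤ g x := by
      intro b
      rw [hg, ← Real.sqrt_sq_eq_abs]
      apply Real.sqrt_le_sqrt
      exact Finset.single_le_sum (fun c _ => sq_nonneg (fstar x c - fhat x c))
        (Finset.mem_univ b)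
    have h1 := abs_le.1 (key a)
    have h2 := abs_le.1 (key (pihat x))
    have h3 := hhat x a
    linarith
  -- integral bound
  have hint : (∫ x, ((Finset.univ.sup' Finset.univ_nonempty fun a => fstar x a)
      - fstar x (pihat x)) ∂P) ≤ ∫ x, 2 * g x ∂P := by
    -- the LHS integrand is nonneg, RHS integrable, pointwise le
    apply integral_mono_of_nonneg
    · exact Filter.Eventually.of_forall fun x =>
        sub_nonneg.2 (Finset.le_sup' (fun a => fstar x a) (Finset.mem_univ (pihat x)))
    · exact hgint.const_mul 2
    · exact Filter.Eventually.of_forall hpt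
  have hgsq : (fun x => g x ^ 2) = h := by
    funext x
    exact Real.sq_sqrt (hhnn x)
  have hvar : (∫ x, g x ∂P) ^ 2 ≤ ∫ x, h x ∂P := by
    have := ProbabilityTheory.variance_nonneg g P
    rw [ProbabilityTheory.variance_eq_sub hgl2] at this
    have heq : (g ^ 2 : X → ℝ) = h := by
      funext x
      simpa using Real.sq_sqrt (hhnn x)
    rw [heq] at this
    linarith
  have hgle : ∫ x, g x ∂P ≤ Real.sqrt (∫ x, h x ∂P) := by
    have hignn : 0 ≤ ∫ x, g x ∂P := integral_nonneg hgnn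
    rw [← Real.sqrt_sq hignn]
    exact Real.sqrt_le_sqrt hvar
  have hrhs : (Fintype.card A : ℝ) * ((Fintype.card A : ℝ)⁻¹ * ∫ x, h x ∂P)
      = ∫ x, h x ∂P := mul_inv_cancel_left₀ (ne_of_gt hcard) _
  calc (∫ x, ((Finset.univ.sup' Finset.univ_nonempty fun a => fstar x a)
        - fstar x (pihat x)) ∂P) ≤ ∫ x, 2 * g x ∂P := hint
    _ = 2 * ∫ x, g x ∂P := integral_const_mul 2 g
    _ ≤ 2 * Real.sqrt (∫ x, h x ∂P) := by linarith
    _ = 2 * Real.sqrt ((Fintype.card A : ℝ) *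
          ((Fintype.card A : ℝ)⁻¹ * ∫ x, ∑ a, (fstar x a - fhat x a) ^ 2 ∂P)) := by
        rw [hrhs]
end
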